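/- (FQGMRES breakdown implies exactness) Assume A Z_j = V_j H_j + ω_j e_j* with V_j having orthonormal columns spanning a space containing r0 = β v₁ (β ≠ 0), H_j ∈ H^{j×j} nonsingular, and ω_j = 0 (breakdown, h_{j+1,j} = 0). Then y_j = H_j⁻¹ (β e₁) yields x_j = x0 + Z_j y_j with b − A x_j = 0, i.e., x_j is the exact solution. -/

import Mathlib

open scoped Quaternion Matrix
open Matrix

/-- The 2-norm of a quaternion vector. -/
noncomputable def vnorm {n : ℕ} (v : Fin n → ℍ[ℝ]) : ℝ :=
  Real.sqrt (∑ i, ‖v i‖ ^ 2)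

theorem fqgmres_breakdown_exact {n j : ℕ}
    (A : Matrix (Fin n) (Fin n) ℍ[ℝ])
    (Z V : Matrix (Fin n) (Fin (j + 1)) ℍ[ℝ])
    (H : Matrix (Fin (j + 1)) (Fin (j + 1)) ℍ[ℝ]) [Invertible H]
    (b x0 r0 : Fin n → ℍ[ℝ]) (β : ℝ)
    (hr0 : r0 = b - A.mulVec x0)
    (hβ : β = vnorm r0) (hβ0 : β ≠ 0)
    (horth : Vᴴ * V = 1)
    (hv1 : (fun i => V i 0) = fun i => β⁻¹ • r0 i)
    (hbreak : A * Z = V * H) :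
    b - A.mulVec (x0 + Z.mulVec
      ((⅟H).mulVec fun i : Fin (j + 1) => if i = 0 then (β : ℍ[ℝ]) else 0)) = 0 := by
  have key : A.mulVec (Z.mulVec ((⅟H).mulVec fun i : Fin (j + 1) =>
      if i = 0 then (β : ℍ[ℝ]) else 0)) = r0 := by
    have hVH : (V * H) * ⅟H = V := by
      rw [Matrix.mul_assoc, mul_invOf_self, Matrix.mul_one]
    rw [mulVec_mulVec, hbreak, mulVec_mulVec, hVH]
    funext i
    simp only [mulVec, dotProduct, mul_ite, mul_zero, Finset.sum_ite_eq',
      Finset.mem_univ, if_true]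
    have := congrFun hv1 i
    rw [this]
    rw [smul_mul_assoc, Quaternion.mul_coe_eq_smul, inv_smul_smul₀ hβ0]
  rw [mulVec_add, key, hr0]
  abel
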